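/- Let K be a field, F a subfield of K, and λ ∈ K a nonzero element that is algebraic over F. If for some integer k the minimal polynomial of λ^k over F equals the minimal polynomial of λ over F (i.e., λ^k is a conjugate of λ over F), then k = 1 or k = −1, or there exists m ≥ 1 such that λ is a primitive m-th root of unity and gcd(m,k) = 1. -/

import Mathlib

open IntermediateField Polynomial

set_option synthInstance.maxHeartbeats 800000 in
lemma minpoly_zpow_eq_of_minpoly_eq {K : Type*} [Field K] (F : Subfield K) (l μ : K)
    (hint : IsIntegral F l) (h : minpoly F μ = minpoly F l) (k : ℤ) :
    minpoly F (μ ^ k) = minpoly F (l ^ k) := by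
  have hroot : μ ∈ (minpoly F l).aroots K := by
    rw [Polynomial.mem_aroots]
    exact ⟨minpoly.ne_zero hint, h ▸ minpoly.aeval F μ⟩
  set φ : F⟮l⟯ →ₐ[F] K := (algHomAdjoinIntegralEquiv F hint).symm ⟨μ, hroot⟩ with hφ
  have hgen : φ (AdjoinSimple.gen F l) = μ :=
    algHomAdjoinIntegralEquiv_symm_apply_gen F hint _
  have hinj : Function.Injective φ := φ.toRingHom.injective
  have h1 : minpoly F (φ (AdjoinSimple.gen F l ^ k)) = minpoly F (AdjoinSimple.gen F l ^ k) :=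
    minpoly.algHom_eq φ hinj _
  have h2 : minpoly F ((F⟮l⟯.val) (AdjoinSimple.gen F l ^ k)) =
      minpoly F (AdjoinSimple.gen F l ^ k) :=
    minpoly.algHom_eq _ (F⟮l⟯.val.toRingHom.injective) _
  have e1 : φ (AdjoinSimple.gen F l ^ k) = μ ^ k := by rw [map_zpow₀, hgen]
  have e2 : (F⟮l⟯.val) (AdjoinSimple.gen F l ^ k) = l ^ k := by
    rw [map_zpow₀]; rfl
  rw [← e1, h1, ← h2, e2]

/-- Let `F` be a subfield of a field `K` and `λ ∈ K` a nonzero element algebraic over `F`.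
If `λ^k` is a conjugate of `λ` over `F` (same minimal polynomial), then `k = ±1` or `λ` is a
primitive `m`-th root of unity for some `m ≥ 1` with `gcd (m, k) = 1`. -/
theorem eq_one_or_neg_one_or_isPrimitiveRoot_of_minpoly_zpow
    {K : Type*} [Field K] (F : Subfield K) (l : K) (hl : l ≠ 0)
    (halg : IsAlgebraic F l) (k : ℤ)
    (hmin : minpoly F (l ^ k) = minpoly F l) :
    k = 1 ∨ k = -1 ∨
      ∃ m : ℕ, 1 ≤ m ∧ IsPrimitiveRoot l m ∧ Int.gcd (m : ℤ) k = 1 := by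
  have hint : IsIntegral F l := halg.isIntegral
  by_cases hk1 : k = 1
  · exact Or.inl hk1
  by_cases hkm1 : k = -1
  · exact Or.inr (Or.inl hkm1)
  right; right
  classical
  -- common final step: if l is a root of unity, conclude
  suffices h : ∃ N : ℕ, N ≠ 0 ∧ l ^ N = 1 by
    obtain ⟨N, hN0, hNl⟩ := h
    have hfin : IsOfFinOrder l := isOfFinOrder_iff_pow_eq_one.mpr ⟨N, Nat.pos_of_ne_zero hN0, hNl⟩
    set m := orderOf l with hmdef
    have hmpos : 0 < m := hfin.orderOf_pos
    have hprim : IsPrimitiveRoot l m := IsPrimitiveRoot.orderOf l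
    refine ⟨m, hmpos, hprim, ?_⟩
    set d := Int.gcd (m : ℤ) k with hd
    have hdm : d ∣ m := by
      have h1 : ((d : ℕ) : ℤ) ∣ (m : ℤ) := Int.gcd_dvd_left _ _
      exact_mod_cast h1
    have hdpos : 0 < d := Nat.pos_of_ne_zero (by
      intro h0
      rw [hd] at h0
      have := Int.gcd_eq_zero_iff.mp h0
      exact hmpos.ne' (by exact_mod_cast this.1))
    set m' := m / d with hm'
    have hm'pos : 0 < m' := Nat.div_pos (Nat.le_of_dvd hmpos hdm) hdpos
    have hdm2 : (d : ℤ) * (m' : ℤ) = m := by exact_mod_cast Nat.mul_div_cancel' hdm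
    obtain ⟨e, he⟩ : ((d : ℕ) : ℤ) ∣ k := Int.gcd_dvd_right _ _
    -- (l^k)^m' = 1
    have hlk : (l ^ k) ^ m' = 1 := by
      rw [← zpow_natCast (l ^ k) m', ← zpow_mul]
      have : k * (m' : ℤ) = e * m := by
        linear_combination (m' : ℤ) * he + e * hdm2
      rw [this, mul_comm, zpow_mul, zpow_natCast, pow_orderOf_eq_one, one_zpow]
    -- minpoly divides X^m' - 1
    have haev : (Polynomial.aeval (l ^ k)) ((Polynomial.X : Polynomial F) ^ m' - 1) = 0 := by
      simp [hlk]
    have hdvd : minpoly F l ∣ (Polynomial.X : Polynomial F) ^ m' - 1 := by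
      rw [← hmin]; exact minpoly.dvd F _ haev
    obtain ⟨q, hq⟩ := hdvd
    have hlm' : l ^ m' = 1 := by
      have : (Polynomial.aeval l) ((Polynomial.X : Polynomial F) ^ m' - 1) = 0 := by
        rw [hq, map_mul, minpoly.aeval, zero_mul]
      have h2 : l ^ m' - 1 = 0 := by simpa using this
      linear_combination h2
    have hmdvd : m ∣ m' := orderOf_dvd_of_pow_eq_one hlm'
    have : m' = m := Nat.dvd_antisymm (Nat.div_dvd_of_dvd hdm) hmdvd
    have := (Nat.div_eq_self.mp this).resolve_left hmpos.ne'
    exact this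
  -- handle k = 0
  by_cases hk0 : k = 0
  · refine ⟨1, one_ne_zero, ?_⟩
    have h1 : l ^ k = 1 := by rw [hk0, zpow_zero]
    rw [h1, minpoly.one] at hmin
    have := minpoly.aeval F l
    rw [← hmin] at this
    have hl1 : l - 1 = 0 := by simpa using this
    rw [pow_one]
    linear_combination hl1
  -- now produce a root of unity relation
  have key : ∀ n : ℕ, minpoly F (l ^ (k ^ n)) = minpoly F l := by
    intro n
    induction n with
    | zero => simp
    | succ n ih =>
      have : l ^ (k ^ (n + 1)) = (l ^ (k ^ n)) ^ k := by
        rw [← zpow_mul, pow_succ]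
      rw [this, minpoly_zpow_eq_of_minpoly_eq F l _ hint ih k, hmin]
  -- all these are roots of minpoly F l mapped to K, a finite set
  set P := (minpoly F l).map (algebraMap F K) with hP
  have hPne : P ≠ 0 :=
    Polynomial.map_ne_zero (minpoly.ne_zero hint)
  have hmem : ∀ n : ℕ, l ^ (k ^ n) ∈ P.roots.toFinset := by
    intro n
    rw [Multiset.mem_toFinset, Polynomial.mem_roots hPne, Polynomial.IsRoot,
      Polynomial.eval_map, ← Polynomial.aeval_def]
    rw [← key n]
    exact minpoly.aeval F _
  have : ∃ a b : ℕ, a ≠ b ∧ l ^ (k ^ a) = l ^ (k ^ b) := by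
    obtain ⟨a, b, hab, hfab⟩ := Finite.exists_ne_map_eq_of_infinite
      (fun n : ℕ => (⟨l ^ (k ^ n), hmem n⟩ : P.roots.toFinset))
    exact ⟨a, b, hab, by simpa using congrArg Subtype.val hfab⟩
  obtain ⟨a, b, hab, heq⟩ := this
  have hkabs : 2 ≤ k.natAbs := by
    omega
  have hkne : k ^ a ≠ k ^ b := by
    intro h
    apply hab
    have : k.natAbs ^ a = k.natAbs ^ b := by
      rw [← Int.natAbs_pow, ← Int.natAbs_pow, h]
    exact Nat.pow_right_injective hkabs this
  set N : ℤ := k ^ a - k ^ b with hN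
  have hNne : N ≠ 0 := sub_ne_zero.mpr hkne
  have hlN : l ^ N = 1 := by
    rw [hN, zpow_sub₀ hl, heq, div_self (zpow_ne_zero _ hl)]
  refine ⟨N.natAbs, Int.natAbs_ne_zero.mpr hNne, ?_⟩
  rcases Int.natAbs_eq N with h | h
  · rw [← zpow_natCast, ← h, hlN]
  · rw [← zpow_natCast]
    have : (N.natAbs : ℤ) = -N := by omega
    rw [this, zpow_neg, hlN, inv_one]
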